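/- Let α ≥ 1 be a natural number such that p = 2^α − 1 is a prime number, and let F be a finite group of order 2^α admitting an automorphism of order p. Then the Frattini subgroup of F is trivial. -/

import Mathlib

/-- In a group of exponent 2 (elementary abelian), the Frattini subgroup is trivial. -/
theorem frattini_eq_bot_of_sq_eq_one {F : Type*} [Group F] [Finite F]
    (h2 : ∀ x : F, x ^ 2 = 1) : frattini F = ⊥ := by
  rw [eq_bot_iff]
  intro z hz
  simp only [Subgroup.mem_bot]
  by_contra hz1
  classical
  -- F is commutative
  have hinv : ∀ x : F, x⁻¹ = x := fun x =>
    inv_eq_of_mul_eq_one_right (by rw [← pow_two]; exact h2 x)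
  have hcomm : ∀ x y : F, x * y = y * x := by
    intro x y
    have h := hinv (x * y)
    rw [mul_inv_rev, hinv x, hinv y] at h
    exact h.symm
  letI : CommGroup F := { (inferInstance : Group F) with mul_comm := hcomm }
  letI : Module (ZMod 2) (Additive F) := AddCommGroup.zmodModule (by
    intro a
    have := h2 (Additive.toMul a)
    rw [pow_two] at this
    simp only [two_nsmul]; exact this)
  haveI : Fact (Nat.Prime 2) := ⟨Nat.prime_two⟩
  -- find a linear functional nonvanishing at z
  have hz0 : (Additive.ofMul z : Additive F) ≠ 0 := hz1
  obtain ⟨f, hf⟩ : ∃ f : Module.Dual (ZMod 2) (Additive F),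
      f (Additive.ofMul z) ≠ 0 := by
    by_contra h
    push_neg at h
    exact hz0 ((Module.forall_dual_apply_eq_zero_iff (ZMod 2) _).mp h)
  -- its kernel is a maximal subgroup
  let M : Subgroup F :=
    { carrier := {y : F | f (Additive.ofMul y) = 0}
      one_mem' := by simp [map_zero f]
      mul_mem' := fun {a b} ha hb => by
        have : f (Additive.ofMul a + Additive.ofMul b) = 0 := by
          rw [map_add, ha, hb, add_zero]
        exact this
      inv_mem' := fun {a} ha => by
        have : f (-(Additive.ofMul a)) = 0 := by rw [map_neg, ha, neg_zero]
        exact this }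
  have hone : ∀ a : ZMod 2, a ≠ 0 → a = 1 := by
    intro a ha
    fin_cases a
    · exact absurd rfl ha
    · rfl
  have hMcoatom : IsCoatom M := by
    constructor
    · intro htop
      apply hf
      have : z ∈ M := htop ▸ Subgroup.mem_top z
      exact this
    · intro K hMK
      rw [eq_top_iff]
      intro y _
      obtain ⟨k, hkK, hkM⟩ := SetLike.exists_of_lt hMK
      have hfk : f (Additive.ofMul k) = 1 := hone _ hkM
      by_cases hy : f (Additive.ofMul y) = 0
      · exact hMK.le hy
      · have h1 : f (Additive.ofMul y) = 1 := hone _ hy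
        have hmem : y * k⁻¹ ∈ M := by
          have : f (Additive.ofMul y + -(Additive.ofMul k)) = 0 := by
            rw [map_add, map_neg, h1, hfk, add_neg_cancel]
          exact this
        have := mul_mem (hMK.le hmem) hkK
        rwa [inv_mul_cancel_right] at this
  exact hf (frattini_le_coatom hMcoatom hz)

theorem frattini_eq_bot_of_mersenne_automorphism
    {α : ℕ} (hα : 1 ≤ α) (hp : Nat.Prime (2 ^ α - 1))
    {F : Type*} [Group F] [Finite F] (hcard : Nat.card F = 2 ^ α)
    (φ : F ≃* F) (hord : orderOf φ = 2 ^ α - 1) :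
    frattini F = ⊥ := by
  classical
  set p := 2 ^ α - 1 with hpdef
  -- φ is not the identity
  have hφne : φ ≠ 1 := by
    intro h
    rw [h, orderOf_one] at hord
    exact hp.one_lt.ne' hord.symm
  obtain ⟨x, hx⟩ : ∃ x : F, φ x ≠ x := by
    by_contra h
    push_neg at h
    exact hφne (MulEquiv.ext h)
  have hx1 : x ≠ 1 := fun h => hx (by rw [h, map_one])
  -- the cyclic group generated by φ inside MulAut F
  set H : Subgroup (MulAut F) := Subgroup.zpowers (φ : MulAut F) with hH
  have hcardH : Nat.card H = p := by
    rw [hH, Nat.card_zpowers]; exact hord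
  -- orbit of x under H
  have horbdvd : Nat.card (MulAction.orbit H x) ∣ p := by
    have := Fintype.ofFinite F
    have := Fintype.ofFinite (MulAut F)
    have := Fintype.ofFinite H
    have := Fintype.ofFinite (MulAction.orbit H x)
    have := Fintype.ofFinite (MulAction.stabilizer H x)
    have key := MulAction.card_orbit_mul_card_stabilizer_eq_card_group H x
    rw [← Nat.card_eq_fintype_card, ← Nat.card_eq_fintype_card,
      ← Nat.card_eq_fintype_card, hcardH] at key
    exact ⟨_, key.symm⟩
  have horb_sub : MulAction.orbit H x ⊆ ({1}ᶜ : Set F) := by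
    rintro y ⟨h, rfl⟩
    simp only [Set.mem_compl_iff, Set.mem_singleton_iff]
    intro hy
    apply hx1
    have : ((h : MulAut F) : F ≃* F) x = 1 := hy
    have := congrArg ((h : MulAut F).symm : F ≃* F) this
    simpa using this
  -- orbit is not a singleton
  have horbne : Nat.card (MulAction.orbit H x) ≠ 1 := by
    intro h1
    have hfin : Finite (MulAction.orbit H x) := Set.Finite.to_subtype (Set.toFinite _)
    have hsub : Subsingleton (MulAction.orbit H x) :=
      Nat.card_eq_one_iff_unique.mp h1 |>.1
    have hmem1 : x ∈ MulAction.orbit H x := MulAction.mem_orbit_self x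
    have hmem2 : φ x ∈ MulAction.orbit H x :=
      ⟨⟨φ, Subgroup.mem_zpowers φ⟩, rfl⟩
    have := hsub.elim ⟨φ x, hmem2⟩ ⟨x, hmem1⟩
    exact hx (congrArg Subtype.val this)
  have horbcard : Nat.card (MulAction.orbit H x) = p :=
    (hp.eq_one_or_self_of_dvd _ horbdvd).resolve_left horbne
  -- the complement of 1 has cardinality p
  have hcompl : ({1}ᶜ : Set F).ncard = p := by
    have := Set.ncard_add_ncard_compl ({1} : Set F)
    rw [Set.ncard_singleton, hcard] at this
    omega
  -- hence the orbit is the whole complement of 1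
  have horb_eq : MulAction.orbit H x = ({1}ᶜ : Set F) := by
    apply Set.eq_of_subset_of_ncard_le horb_sub _ (Set.toFinite _)
    rw [hcompl, ← horbcard, Nat.card_coe_set_eq]
  -- every nontrivial element has the same order as x
  have hsameord : ∀ y : F, y ≠ 1 → orderOf y = orderOf x := by
    intro y hy
    have : y ∈ MulAction.orbit H x := by
      rw [horb_eq]; simpa using hy
    obtain ⟨h, rfl⟩ := this
    exact orderOf_injective ((h : MulAut F) : F ≃* F).toMonoidHom
      (MulEquiv.injective _) x
  -- there is an element of order 2
  obtain ⟨g, hg⟩ : ∃ g : F, orderOf g = 2 := by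
    have := Fintype.ofFinite F
    haveI : Fact (Nat.Prime 2) := ⟨Nat.prime_two⟩
    apply exists_prime_orderOf_dvd_card 2
    rw [← Nat.card_eq_fintype_card, hcard]
    exact dvd_pow_self 2 (Nat.one_le_iff_ne_zero.mp hα)
  have hg1 : g ≠ 1 := fun h => by simp [h] at hg
  have hordx : orderOf x = 2 := by rw [← hsameord g hg1, hg]
  -- every element squares to 1
  have h2 : ∀ y : F, y ^ 2 = 1 := by
    intro y
    by_cases hy : y = 1
    · simp [hy]
    · have := pow_orderOf_eq_one y
      rwa [hsameord y hy, hordx] at this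
  exact frattini_eq_bot_of_sq_eq_one h2
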